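/- Let G=(V,E) be a graph and H=(V,E') a subgraph with E'⊆E. If A_H is positive definite for every positive definite matrix A with zeros at non-edges of G, then H is a disjoint union of graphs each of which is an induced subgraph of G. -/

import Mathlib

open Finset Matrix

def threshold {n : ℕ} (G : SimpleGraph (Fin n)) [DecidableRel G.Adj]
    (A : Matrix (Fin n) (Fin n) ℝ) : Matrix (Fin n) (Fin n) ℝ :=
  Matrix.of fun i j => if i = j ∨ G.Adj i j then A i j else 0

namespace Stmt8Aux

variable {n : ℕ}

/-- standard basis vector as a function -/
def ev (i : Fin n) : Fin n → ℝ := fun u => if u = i then 1 else 0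

lemma ev_dot (i : Fin n) (y : Fin n → ℝ) : ev i ⬝ᵥ y = y i := by
  simp [ev, dotProduct, ite_and]

lemma ev_ne_zero {i : Fin n} {u : Fin n} (h : ev i u ≠ 0) : u = i := by
  by_contra hc; simp [ev, hc] at h

/-- edge vector of the `l`-th path edge -/
def gv (v : ℕ → Fin n) (l : ℕ) : Fin n → ℝ := ev (v l) + ev (v (l + 1))

lemma gv_dot (v : ℕ → Fin n) (l : ℕ) (y : Fin n → ℝ) :
    gv v l ⬝ᵥ y = y (v l) + y (v (l + 1)) := by
  simp [gv, add_dotProduct, ev_dot]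

lemma gv_ne_zero {v : ℕ → Fin n} {l : ℕ} {u : Fin n} (h : gv v l u ≠ 0) :
    u = v l ∨ u = v (l + 1) := by
  by_contra hc
  push_neg at hc
  simp [gv, ev, hc.1, hc.2] at h

open Classical in
/-- weights for off-path diagonal -/
noncomputable def offd (v : ℕ → Fin n) (k : ℕ) : Fin n → ℝ :=
  fun u => if ∃ l ≤ k, v l = u then 0 else 1

noncomputable def Bmat (v : ℕ → Fin n) (k : ℕ) : Matrix (Fin n) (Fin n) ℝ :=
  (∑ l ∈ Finset.range k, vecMulVec (gv v l) (gv v l)) + Matrix.diagonal (offd v k)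

noncomputable def Amat (v : ℕ → Fin n) (k : ℕ) (i j : Fin n) (σ : ℝ) :
    Matrix (Fin n) (Fin n) ℝ :=
  Bmat v k + σ • (vecMulVec (ev i) (ev j) + vecMulVec (ev j) (ev i))

lemma dot_vecMulVec (f g x y : Fin n → ℝ) :
    x ⬝ᵥ (vecMulVec f g) *ᵥ y = (x ⬝ᵥ f) * (g ⬝ᵥ y) := by
  simp [vecMulVec, mulVec, dotProduct, Finset.mul_sum, Finset.sum_mul, mul_assoc]
  exact Finset.sum_comm

lemma dot_sum_mulVec (s : Finset ℕ) (M : ℕ → Matrix (Fin n) (Fin n) ℝ)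
    (x y : Fin n → ℝ) :
    x ⬝ᵥ (∑ l ∈ s, M l) *ᵥ y = ∑ l ∈ s, x ⬝ᵥ (M l) *ᵥ y := by
  classical
  induction s using Finset.induction_on with
  | empty => simp
  | @insert a s h ih => rw [Finset.sum_insert h, Matrix.add_mulVec, dotProduct_add, ih,
      Finset.sum_insert h]

lemma dot_diagonal (d x y : Fin n → ℝ) :
    x ⬝ᵥ (Matrix.diagonal d) *ᵥ y = ∑ u, d u * (x u * y u) := by
  simp [dotProduct, Matrix.mulVec_diagonal]
  congr 1; ext u; ring

lemma quadB (v : ℕ → Fin n) (k : ℕ) (y : Fin n → ℝ) :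
    y ⬝ᵥ (Bmat v k) *ᵥ y =
      (∑ l ∈ Finset.range k, (y (v l) + y (v (l + 1))) ^ 2) +
        ∑ u, offd v k u * (y u) ^ 2 := by
  rw [Bmat, Matrix.add_mulVec, dotProduct_add, dot_sum_mulVec, dot_diagonal]
  congr 1
  · refine Finset.sum_congr rfl fun l _ => ?_
    rw [dot_vecMulVec, dotProduct_comm, gv_dot]; ring
  · refine Finset.sum_congr rfl fun u _ => ?_
    ring

lemma quadA (v : ℕ → Fin n) (k : ℕ) (i j : Fin n) (σ : ℝ) (y : Fin n → ℝ) :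
    y ⬝ᵥ (Amat v k i j σ) *ᵥ y =
      ((∑ l ∈ Finset.range k, (y (v l) + y (v (l + 1))) ^ 2) +
        ∑ u, offd v k u * (y u) ^ 2) + 2 * σ * (y i * y j) := by
  rw [Amat, Matrix.add_mulVec, dotProduct_add, quadB, Matrix.smul_mulVec,
    dotProduct_smul, Matrix.add_mulVec, dotProduct_add, dot_vecMulVec, dot_vecMulVec,
    dotProduct_comm y (ev i), dotProduct_comm y (ev j), ev_dot, ev_dot]
  simp only [smul_eq_mul]
  ring

-- continuing inside namespace Stmt8Aux (will be merged)
section Part2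
variable {n : ℕ}

lemma gv_prod_zero {H : SimpleGraph (Fin n)} {v : ℕ → Fin n} {k : ℕ}
    (hadj : ∀ l < k, H.Adj (v l) (v (l + 1))) {u u' : Fin n}
    (hne : u ≠ u') (hnadj : ¬ H.Adj u u') {l : ℕ} (hl : l < k) :
    gv v l u * gv v l u' = 0 := by
  by_contra hc
  have h1 : u = v l ∨ u = v (l + 1) := gv_ne_zero (left_ne_zero_of_mul hc)
  have h2 : u' = v l ∨ u' = v (l + 1) := gv_ne_zero (right_ne_zero_of_mul hc)
  have hHl := hadj l hl
  rcases h1 with h1 | h1 <;> rcases h2 with h2 | h2 <;> subst h1 <;> subst h2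
  · exact hne rfl
  · exact hnadj hHl
  · exact hnadj hHl.symm
  · exact hne rfl

lemma Bmat_offdiag {H : SimpleGraph (Fin n)} {v : ℕ → Fin n} {k : ℕ}
    (hadj : ∀ l < k, H.Adj (v l) (v (l + 1))) {u u' : Fin n}
    (hne : u ≠ u') (hnadj : ¬ H.Adj u u') :
    Bmat v k u u' = 0 := by
  rw [Bmat, Matrix.add_apply, Matrix.diagonal_apply_ne _ hne, Matrix.sum_apply]
  rw [add_zero]
  refine Finset.sum_eq_zero fun l hl => ?_
  rw [Matrix.vecMulVec_apply]
  exact gv_prod_zero hadj hne hnadj (Finset.mem_range.mp hl)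

lemma evev_apply_zero {i j u u' : Fin n} (h : ¬ (u = i ∧ u' = j)) :
    vecMulVec (ev i) (ev j) u u' = 0 := by
  rw [Matrix.vecMulVec_apply]
  by_cases h1 : u = i
  · by_cases h2 : u' = j
    · exact absurd ⟨h1, h2⟩ h
    · simp [ev, h2]
  · simp [ev, h1]

lemma Amat_offdiag {G H : SimpleGraph (Fin n)} {v : ℕ → Fin n} {k : ℕ} {i j : Fin n}
    {σ : ℝ} (hsub : H ≤ G)
    (hadj : ∀ l < k, H.Adj (v l) (v (l + 1))) (hGij : G.Adj i j) {u u' : Fin n}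
    (hne : u ≠ u') (hnadj : ¬ G.Adj u u') :
    Amat v k i j σ u u' = 0 := by
  have hB : Bmat v k u u' = 0 :=
    Bmat_offdiag hadj hne (fun hc => hnadj (hsub hc))
  have h1 : vecMulVec (ev i) (ev j) u u' = 0 := by
    refine evev_apply_zero fun hc => hnadj ?_
    rw [hc.1, hc.2]; exact hGij
  have h2 : vecMulVec (ev j) (ev i) u u' = 0 := by
    refine evev_apply_zero fun hc => hnadj ?_
    rw [hc.1, hc.2]; exact hGij.symm
  rw [Amat, Matrix.add_apply, hB, Matrix.smul_apply, Matrix.add_apply, h1, h2]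
  simp

lemma Amat_symm (v : ℕ → Fin n) (k : ℕ) (i j : Fin n) (σ : ℝ) (u u' : Fin n) :
    Amat v k i j σ u u' = Amat v k i j σ u' u := by
  simp only [Amat, Bmat, Matrix.add_apply, Matrix.smul_apply, Matrix.sum_apply,
    Matrix.vecMulVec_apply]
  have hd : Matrix.diagonal (offd v k) u u' = Matrix.diagonal (offd v k) u' u := by
    by_cases h : u = u'
    · rw [h]
    · rw [Matrix.diagonal_apply_ne _ h, Matrix.diagonal_apply_ne _ (Ne.symm h)]
  rw [hd]
  have hs : ∑ l ∈ Finset.range k, gv v l u * gv v l u'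
      = ∑ l ∈ Finset.range k, gv v l u' * gv v l u :=
    Finset.sum_congr rfl fun l _ => mul_comm _ _
  rw [hs]
  ring_nf

lemma Amat_isHermitian (v : ℕ → Fin n) (k : ℕ) (i j : Fin n) (σ : ℝ) :
    (Amat v k i j σ).IsHermitian := by
  ext u u'
  rw [Matrix.conjTranspose_apply, star_trivial]
  exact Amat_symm v k i j σ u' u

lemma threshold_Amat {H : SimpleGraph (Fin n)} [DecidableRel H.Adj]
    {v : ℕ → Fin n} {k : ℕ} {i j : Fin n} {σ : ℝ}
    (hadj : ∀ l < k, H.Adj (v l) (v (l + 1)))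
    (hij : i ≠ j) (hnadjH : ¬ H.Adj i j) :
    threshold H (Amat v k i j σ) = Bmat v k := by
  ext u u'
  show (if u = u' ∨ H.Adj u u' then Amat v k i j σ u u' else 0) = Bmat v k u u'
  by_cases hc : u = u' ∨ H.Adj u u'
  · rw [if_pos hc]
    have h1 : vecMulVec (ev i) (ev j) u u' = 0 := by
      refine evev_apply_zero fun hc2 => ?_
      rw [hc2.1, hc2.2] at hc
      exact hc.elim hij (fun hh => hnadjH hh)
    have h2 : vecMulVec (ev j) (ev i) u u' = 0 := by
      refine evev_apply_zero fun hc2 => ?_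
      rw [hc2.1, hc2.2] at hc
      exact hc.elim (fun hh => hij hh.symm) (fun hh => hnadjH hh.symm)
    rw [Amat, Matrix.add_apply, Matrix.smul_apply, Matrix.add_apply, h1, h2]
    simp
  · push_neg at hc
    rw [if_neg (by push_neg; exact hc)]
    exact (Bmat_offdiag hadj hc.1 hc.2).symm

end Part2

section Part3
variable {n : ℕ}

lemma telescope (v : ℕ → Fin n) (y : Fin n → ℝ) (m : ℕ) :
    (-1 : ℝ) ^ m * y (v m) =
      y (v 0) + ∑ l ∈ Finset.range m, (-1 : ℝ) ^ (l + 1) * (y (v l) + y (v (l + 1))) := by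
  induction m with
  | zero => simp
  | succ m ih =>
    rw [Finset.sum_range_succ, ← add_assoc, ← ih]
    ring

lemma offd_nonneg (v : ℕ → Fin n) (k : ℕ) (u : Fin n) : 0 ≤ offd v k u := by
  rw [offd]; split <;> norm_num

lemma Amat_posdef (v : ℕ → Fin n) (k : ℕ) (hk : 0 < k) (i j : Fin n)
    (hv0 : v 0 = i) (hvk : v k = j) :
    (Amat v k i j ((-1 : ℝ) ^ k * (1 / (2 * k)))).PosDef := by
  refine Matrix.PosDef.of_dotProduct_mulVec_pos (Amat_isHermitian v k i j _) fun y hy => ?_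
  have hst : star y = y := by ext u; simp
  rw [hst, quadA]
  set ε : ℝ := 1 / (2 * k) with hεdef
  have hkR : (0 : ℝ) < (k : ℝ) := by exact_mod_cast hk
  have hε : 0 < ε := by positivity
  set a : ℝ := y (v 0) with hadef
  set s : ℕ → ℝ := fun l => y (v l) + y (v (l + 1)) with hsdef
  set T : ℝ := ∑ l ∈ Finset.range k, (-1 : ℝ) ^ (l + 1) * s l with hTdef
  have htel : (-1 : ℝ) ^ k * y (v k) = a + T := telescope v y k
  have key : 2 * ((-1 : ℝ) ^ k * ε) * (y i * y j) = 2 * ε * (a * (a + T)) := by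
    rw [← hv0, ← hvk, ← htel, ← hadef]
    ring
  rw [key]
  set S : ℝ := ∑ l ∈ Finset.range k, s l ^ 2 with hSdef
  set off : ℝ := ∑ u, offd v k u * y u ^ 2 with hoffdef
  clear_value ε a s T S off
  have hterm : ∀ l ∈ Finset.range k,
      (1 / 2) * s l ^ 2 - 2 * ε ^ 2 * a ^ 2 ≤
        s l ^ 2 + 2 * ε * (a * ((-1 : ℝ) ^ (l + 1) * s l)) := by
    intro l _
    obtain ⟨c, hc⟩ : ∃ c : ℝ, c = (-1 : ℝ) ^ (l + 1) := ⟨_, rfl⟩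
    rw [← hc]
    have hc2 : c ^ 2 = 1 := by
      rw [hc, ← pow_mul, mul_comm, pow_mul]; norm_num
    have expand : s l ^ 2 + 2 * ε * (a * (c * s l)) -
        ((1 / 2) * s l ^ 2 - 2 * ε ^ 2 * a ^ 2) =
        (1 / 2) * (c * s l + 2 * ε * a) ^ 2 + (1 / 2) * (1 - c ^ 2) * s l ^ 2 := by
      ring
    rw [hc2] at expand
    linarith [sq_nonneg (c * s l + 2 * ε * a), expand]
  have hsum := Finset.sum_le_sum hterm
  have hL : S + 2 * ε * (a * T) =
      ∑ l ∈ Finset.range k, (s l ^ 2 + 2 * ε * (a * ((-1 : ℝ) ^ (l + 1) * s l))) := by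
    rw [hSdef, hTdef, Finset.mul_sum, Finset.mul_sum, ← Finset.sum_add_distrib]
  have hR : ∑ l ∈ Finset.range k, ((1 / 2) * s l ^ 2 - 2 * ε ^ 2 * a ^ 2) =
      (1 / 2) * S - (k : ℝ) * (2 * ε ^ 2 * a ^ 2) := by
    rw [Finset.sum_sub_distrib, Finset.sum_const, Finset.card_range, nsmul_eq_mul,
      hSdef, Finset.mul_sum]
  rw [hR, ← hL] at hsum
  have hcoef : 2 * ε * a ^ 2 - (k : ℝ) * (2 * ε ^ 2 * a ^ 2) = ε * a ^ 2 := by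
    have h1 : 2 * ε - 2 * (k : ℝ) * ε ^ 2 = ε := by
      rw [hεdef]; field_simp; ring
    calc 2 * ε * a ^ 2 - (k : ℝ) * (2 * ε ^ 2 * a ^ 2)
        = (2 * ε - 2 * (k : ℝ) * ε ^ 2) * a ^ 2 := by ring
      _ = ε * a ^ 2 := by rw [h1]
  have hS0 : 0 ≤ S := by
    rw [hSdef]; exact Finset.sum_nonneg fun l _ => sq_nonneg _
  have hoff0 : 0 ≤ off := by
    rw [hoffdef]
    exact Finset.sum_nonneg fun u _ => mul_nonneg (offd_nonneg v k u) (sq_nonneg _)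
  have hP0 : 0 ≤ ε * a ^ 2 := mul_nonneg hε.le (sq_nonneg a)
  by_contra hq
  push_neg at hq
  have hexpand : 2 * ε * (a * (a + T)) = 2 * ε * a ^ 2 + 2 * ε * (a * T) := by ring
  rw [hexpand] at hq
  have hmain : (1 / 2) * S + off + ε * a ^ 2 ≤ 0 := by linarith
  have hSz : S = 0 := le_antisymm (by linarith) hS0
  have hoffz : off = 0 := le_antisymm (by linarith) hoff0
  have haz : a = 0 := by
    have h2 : ε * a ^ 2 = 0 := le_antisymm (by linarith) hP0
    have h3 : a ^ 2 = 0 := by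
      rcases mul_eq_zero.mp h2 with h | h
      · exact absurd h hε.ne'
      · exact h
    exact sq_eq_zero_iff.mp h3
  have hSz' : ∑ l ∈ Finset.range k, s l ^ 2 = 0 := by rw [← hSdef]; exact hSz
  have hoffz' : ∑ u, offd v k u * y u ^ 2 = 0 := by rw [← hoffdef]; exact hoffz
  have hs0 : ∀ l, l < k → s l = 0 := by
    intro l hl
    have h1 := (Finset.sum_eq_zero_iff_of_nonneg (fun l _ => sq_nonneg (s l))).mp hSz' l
      (Finset.mem_range.mpr hl)
    exact sq_eq_zero_iff.mp h1
  have hyoff : ∀ u, ¬ (∃ l ≤ k, v l = u) → y u = 0 := by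
    intro u hu
    have h1 := (Finset.sum_eq_zero_iff_of_nonneg
      (fun u _ => mul_nonneg (offd_nonneg v k u) (sq_nonneg _))).mp hoffz' u (Finset.mem_univ u)
    rw [offd, if_neg hu, one_mul] at h1
    exact sq_eq_zero_iff.mp h1
  have hpath : ∀ l, l ≤ k → y (v l) = 0 := by
    intro l
    induction l with
    | zero => intro _; rw [← hadef]; exact haz
    | succ l ih =>
      intro hl
      have h1 := hs0 l (by omega)
      have h2 := ih (by omega)
      rw [hsdef] at h1
      simp only [] at h1
      rw [h2, zero_add] at h1
      exact h1
  apply hy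
  funext u
  show y u = 0
  by_cases hu : ∃ l ≤ k, v l = u
  · obtain ⟨l, hl, rfl⟩ := hu
    exact hpath l hl
  · exact hyoff u hu

open Classical in
noncomputable def xvec (v : ℕ → Fin n) (k : ℕ) : Fin n → ℝ :=
  fun u => ∑ l ∈ Finset.range (k + 1), if v l = u then (-1 : ℝ) ^ l else 0

lemma xvec_on {v : ℕ → Fin n} {k : ℕ}
    (hinj : ∀ l ≤ k, ∀ m ≤ k, v l = v m → l = m) {m : ℕ} (hm : m ≤ k) :
    xvec v k (v m) = (-1 : ℝ) ^ m := by
  rw [xvec]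
  rw [Finset.sum_eq_single_of_mem m (Finset.mem_range.mpr (by omega))]
  · rw [if_pos rfl]
  · intro l hl hlm
    rw [if_neg]
    intro hc
    exact hlm (hinj l (by simpa using Nat.lt_succ_iff.mp (Finset.mem_range.mp hl)) m hm hc)

lemma xvec_off {v : ℕ → Fin n} {k : ℕ} {u : Fin n} (hu : ¬ ∃ l ≤ k, v l = u) :
    xvec v k u = 0 := by
  rw [xvec]
  refine Finset.sum_eq_zero fun l hl => ?_
  rw [if_neg]
  intro hc
  exact hu ⟨l, Nat.lt_succ_iff.mp (Finset.mem_range.mp hl), hc⟩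

lemma getVert_inj {V : Type*} {H : SimpleGraph V} {a b : V} (w : H.Walk a b)
    (hw : w.IsPath) :
    ∀ l ≤ w.length, ∀ m ≤ w.length, w.getVert l = w.getVert m → l = m := by
  induction w with
  | nil =>
    intro l hl m hm _
    simp only [SimpleGraph.Walk.length_nil, Nat.le_zero] at hl hm
    omega
  | @cons u c d hadj q ih =>
    rw [SimpleGraph.Walk.cons_isPath_iff] at hw
    intro l hl m hm heq
    rw [SimpleGraph.Walk.length_cons] at hl hm
    rcases l with _ | l <;> rcases m with _ | m
    · rfl
    · exfalso
      apply hw.2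
      rw [SimpleGraph.Walk.mem_support_iff_exists_getVert]
      exact ⟨m, by simpa using heq.symm, by omega⟩
    · exfalso
      apply hw.2
      rw [SimpleGraph.Walk.mem_support_iff_exists_getVert]
      exact ⟨l, by simpa using heq, by omega⟩
    · have := ih hw.1 l (by omega) m (by omega) (by simpa using heq)
      omega

end Part3

end Stmt8Aux

open Stmt8Aux in
/-- If thresholding with respect to a subgraph `H ≤ G` preserves positive definiteness
of every positive definite matrix with zeros at the non-edges of `G`, then every
connected component of `H` is an induced subgraph of `G`. -/
theorem stmt_8 {n : ℕ} (G H : SimpleGraph (Fin n)) [DecidableRel G.Adj]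
    [DecidableRel H.Adj] (hsub : H ≤ G)
    (h : ∀ A : Matrix (Fin n) (Fin n) ℝ, A.PosDef →
      (∀ i j : Fin n, i ≠ j → ¬ G.Adj i j → A i j = 0) → (threshold H A).PosDef) :
    ∀ i j : Fin n, H.Reachable i j → G.Adj i j → H.Adj i j := by
  intro i j hreach hGadj
  by_contra hHadj
  have hij : i ≠ j := hGadj.ne
  obtain ⟨w0⟩ := hreach
  set w : H.Walk i j := w0.toPath.1 with hwdef
  have hw : w.IsPath := w0.toPath.2
  set k : ℕ := w.length with hkdef
  set v : ℕ → Fin n := w.getVert with hvdef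
  have hv0 : v 0 = i := w.getVert_zero
  have hvk : v k = j := w.getVert_length
  have hk : 0 < k := by
    rcases Nat.eq_zero_or_pos k with h0 | h0
    · exfalso
      apply hij
      rw [← hv0, ← hvk, h0]
    · exact h0
  have hadjH : ∀ l < k, H.Adj (v l) (v (l + 1)) := fun l hl => w.adj_getVert_succ hl
  have hinj : ∀ l ≤ k, ∀ m ≤ k, v l = v m → l = m := getVert_inj w hw
  set σ : ℝ := (-1 : ℝ) ^ k * (1 / (2 * k)) with hσdef
  have hApd : (Amat v k i j σ).PosDef := Amat_posdef v k hk i j hv0 hvk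
  have hZero : ∀ u u' : Fin n, u ≠ u' → ¬ G.Adj u u' → Amat v k i j σ u u' = 0 :=
    fun u u' h1 h2 => Amat_offdiag hsub hadjH hGadj h1 h2
  have hPD := h (Amat v k i j σ) hApd hZero
  rw [threshold_Amat hadjH hij hHadj] at hPD
  -- the alternating vector kills the quadratic form of `Bmat`
  have hx0 : xvec v k ≠ 0 := by
    intro h0
    have h1 : xvec v k (v 0) = 1 := by
      simpa using xvec_on hinj (Nat.zero_le k)
    rw [h0] at h1
    simp at h1
  have hpos := hPD.dotProduct_mulVec_pos hx0
  have hst : star (xvec v k) = xvec v k := by ext u; simp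
  rw [hst, quadB] at hpos
  have hz1 : ∀ l ∈ Finset.range k, (xvec v k (v l) + xvec v k (v (l + 1))) ^ 2 = 0 := by
    intro l hl
    have hlk := Finset.mem_range.mp hl
    rw [xvec_on hinj (by omega), xvec_on hinj (by omega)]
    rw [pow_succ]
    ring
  have hz2 : ∀ u : Fin n, offd v k u * (xvec v k u) ^ 2 = 0 := by
    intro u
    by_cases hu : ∃ l ≤ k, v l = u
    · rw [offd, if_pos hu, zero_mul]
    · rw [xvec_off hu]
      ring
  rw [Finset.sum_eq_zero hz1, Finset.sum_eq_zero fun u _ => hz2 u] at hpos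
  norm_num at hpos
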